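/- Let Γ denote the real Gamma function and define f(M) = (Γ(M + 1/2)/Γ(M))². Let N and C be positive integers with N ≤ C ≤ 2N − 1, set G = 2N − C, N_1 = ⋯ = N_{G−1} = 1 and N_G = C − N + 1. Then ∑_{g=1}^{G} N_g² + ∑_{g_1 ≠ g_2} f(N_{g_1}) f(N_{g_2}) = (C − N)² + C + (2N − C − 1)(2N − C − 2) Γ(3/2)⁴ + 2(2N − C − 1) ( Γ(C − N + 3/2) Γ(3/2) / Γ(C − N + 1) )², where the sum over g_1 ≠ g_2 ranges over all ordered pairs (g_1, g_2) with g_1 ≠ g_2. -/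

import Mathlib

open Finset Real

/-- Pareto frontier of the performance-complexity trade-off: exact expected received
signal power of the optimal `N`-element BD-RIS with circuit complexity `C`
(`N ≤ C ≤ 2N - 1`), having `G = 2N - C` groups with sizes
`N_1 = ⋯ = N_{G-1} = 1`, `N_G = C - N + 1`, where `f M = (Γ(M + 1/2)/Γ(M))²`. -/
theorem pareto_frontier (N C : ℕ) (hN : 0 < N) (hC : 0 < C)
    (hNC : N ≤ C) (hC2 : C ≤ 2 * N - 1)
    (f : ℝ → ℝ) (hf : ∀ M : ℝ, f M = (Real.Gamma (M + 1 / 2) / Real.Gamma M) ^ 2)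
    (G : ℕ) (hG : G = 2 * N - C)
    (Ng : Fin G → ℕ) (hNg : ∀ g : Fin G, Ng g = if (g : ℕ) < G - 1 then 1 else C - N + 1) :
    ∑ g : Fin G, ((Ng g : ℝ)) ^ 2
      + ∑ g₁ : Fin G, ∑ g₂ ∈ univ.erase g₁, f (Ng g₁) * f (Ng g₂)
      = ((C : ℝ) - (N : ℝ)) ^ 2 + (C : ℝ)
        + (2 * (N : ℝ) - (C : ℝ) - 1) * (2 * (N : ℝ) - (C : ℝ) - 2)
            * Real.Gamma (3 / 2) ^ 4
        + 2 * (2 * (N : ℝ) - (C : ℝ) - 1)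
            * (Real.Gamma ((C : ℝ) - (N : ℝ) + 3 / 2) * Real.Gamma (3 / 2)
                / Real.Gamma ((C : ℝ) - (N : ℝ) + 1)) ^ 2 := by
  have hC2N : C ≤ 2 * N := le_trans hC2 (Nat.sub_le _ _)
  have hGpos : 0 < G := by omega
  set K := C - N with hK
  have hKr : ((K : ℕ) : ℝ) = (C : ℝ) - (N : ℝ) := by
    rw [hK, Nat.cast_sub hNC]
  have hGr : ((G : ℕ) : ℝ) = 2 * (N : ℝ) - (C : ℝ) := by
    rw [hG]
    push_cast [hC2N]
    ring
  set L : Fin G := ⟨G - 1, by omega⟩ with hL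
  have hNgL : ∀ g : Fin G, ((Ng g : ℕ) : ℝ) = if g = L then (K : ℝ) + 1 else 1 := by
    intro g
    rw [hNg]
    by_cases h : g = L
    · have h1 : ¬ ((g : ℕ) < G - 1) := by
        subst h; simp [hL]
      rw [if_neg h1, if_pos h, Nat.cast_add, Nat.cast_one]
    · have h1 : (g : ℕ) < G - 1 := by
        have := g.isLt
        have hne : (g : ℕ) ≠ G - 1 := fun hc => h (Fin.ext (by simp [hL, hc]))
        omega
      simp [h, h1]
  have hsum : ∀ x y : ℝ, ∑ g : Fin G, (if g = L then x else y) = x + ((G : ℝ) - 1) * y := by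
    intro x y
    have heq : ∀ g : Fin G, (if g = L then x else y) = (if g = L then x - y else 0) + y := by
      intro g; by_cases h : g = L <;> simp [h]
    simp_rw [heq]
    rw [Finset.sum_add_distrib, Finset.sum_ite_eq' univ L fun _ => x - y]
    simp [Finset.card_univ]
    ring
  set a := f 1 with ha'
  set b := f ((K : ℝ) + 1) with hb'
  have hfg : ∀ g : Fin G, f ((Ng g : ℕ) : ℝ) = if g = L then b else a := by
    intro g
    rw [hNgL, apply_ite f]
  have hT : ∑ g : Fin G, f ((Ng g : ℕ) : ℝ) = b + ((G : ℝ) - 1) * a := by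
    simp_rw [hfg]; exact hsum b a
  have hU : ∑ g : Fin G, (f ((Ng g : ℕ) : ℝ)) ^ 2 = b ^ 2 + ((G : ℝ) - 1) * a ^ 2 := by
    simp_rw [hfg, apply_ite (· ^ 2)]; exact hsum _ _
  have hS1 : ∑ g : Fin G, ((Ng g : ℕ) : ℝ) ^ 2 = ((K : ℝ) + 1) ^ 2 + ((G : ℝ) - 1) * 1 ^ 2 := by
    simp_rw [hNgL, apply_ite (· ^ 2)]
    rw [hsum]
  have hS2 : ∑ g₁ : Fin G, ∑ g₂ ∈ univ.erase g₁, f ((Ng g₁ : ℕ) : ℝ) * f ((Ng g₂ : ℕ) : ℝ)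
      = (b + ((G : ℝ) - 1) * a) ^ 2 - (b ^ 2 + ((G : ℝ) - 1) * a ^ 2) := by
    have hinner : ∀ g₁ : Fin G, ∑ g₂ ∈ univ.erase g₁, f ((Ng g₁ : ℕ) : ℝ) * f ((Ng g₂ : ℕ) : ℝ)
        = f ((Ng g₁ : ℕ) : ℝ) * ((∑ g : Fin G, f ((Ng g : ℕ) : ℝ)) - f ((Ng g₁ : ℕ) : ℝ)) := by
      intro g₁
      rw [← Finset.mul_sum, Finset.sum_erase_eq_sub (Finset.mem_univ g₁)]
    simp_rw [hinner, mul_sub, Finset.sum_sub_distrib, ← Finset.sum_mul, hT, ← pow_two, hU]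
  have hav : a = Real.Gamma (3 / 2) ^ 2 := by
    rw [ha', hf]
    norm_num [Real.Gamma_one]
  have hbv : b = (Real.Gamma ((K : ℝ) + 3 / 2) / Real.Gamma ((K : ℝ) + 1)) ^ 2 := by
    rw [hb', hf, show (K : ℝ) + 1 + 1 / 2 = (K : ℝ) + 3 / 2 by ring]
  rw [hS1, hS2, ← hKr, ← hGr, hav, hbv]
  linear_combination (2 : ℝ) * hKr + hGr
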